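/- Let y, s, t, α ∈ ℝ with α ≥ 0. Define γ : ℝ² → ℝ by γ(w,x) = 1 if α > 1 and √(4|y| + (w − s·x)²) − t(w + s·x) ≤ 0, and γ(w,x) = α otherwise. Then the function f : ℝ² → ℝ given by f(w,x) = γ(w,x)·(√(4|y| + (w − s·x)²) − t(w + s·x)) is convex on ℝ². -/

import Mathlib

noncomputable def gammaFn (y s t α : ℝ) (w x : ℝ) : ℝ :=
  if α > 1 ∧ Real.sqrt (4 * |y| + (w - s * x) ^ 2) - t * (w + s * x) ≤ 0 then 1 else α

noncomputable def myAff (y s : ℝ) : (ℝ × ℝ) →ᵃ[ℝ] ℂ where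
  toFun p := ⟨Real.sqrt (4 * |y|), p.1 - s * p.2⟩
  linear := {
    toFun := fun p => ⟨0, p.1 - s * p.2⟩
    map_add' := fun a b => by apply Complex.ext <;> simp <;> ring
    map_smul' := fun c a => by apply Complex.ext <;> simp [Complex.ofReal] <;> ring }
  map_vadd' := fun p v => by
    apply Complex.ext <;> simp <;> ring

lemma g_convex (y s t : ℝ) :
    ConvexOn ℝ (Set.univ : Set (ℝ × ℝ))
      (fun p : ℝ × ℝ => Real.sqrt (4 * |y| + (p.1 - s * p.2) ^ 2) - t * (p.1 + s * p.2)) := by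
  have h1 : ConvexOn ℝ (Set.univ : Set (ℝ × ℝ)) (fun p => ‖myAff y s p‖) :=
    (convexOn_univ_norm).comp_affineMap (myAff y s)
  have heq : ∀ p : ℝ × ℝ, ‖myAff y s p‖ = Real.sqrt (4 * |y| + (p.1 - s * p.2) ^ 2) := by
    intro p
    have : myAff y s p = ⟨Real.sqrt (4 * |y|), p.1 - s * p.2⟩ := rfl
    rw [this, Complex.norm_def, Complex.normSq_mk,
      Real.mul_self_sqrt (by positivity : (0:ℝ) ≤ 4 * |y|)]
    ring_nf
  have h2 : ConvexOn ℝ (Set.univ : Set (ℝ × ℝ)) (fun p : ℝ × ℝ => -(t * (p.1 + s * p.2))) := by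
    refine ⟨convex_univ, fun a _ b _ u v _ _ huv => le_of_eq ?_⟩
    simp [Prod.smul_fst, Prod.smul_snd]
    ring
  have h3 := h1.add h2
  have : (fun p : ℝ × ℝ => Real.sqrt (4 * |y| + (p.1 - s * p.2) ^ 2) - t * (p.1 + s * p.2)) =
      ((fun p => ‖myAff y s p‖) + fun p : ℝ × ℝ => -(t * (p.1 + s * p.2))) := by
    funext p
    simp only [Pi.add_apply]
    rw [heq p]
    ring
  rw [this]
  exact h3

theorem branchhull_constraint_convex (y s t α : ℝ) (hα : 0 ≤ α) :
    ConvexOn ℝ (Set.univ : Set (ℝ × ℝ))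
      (fun p => gammaFn y s t α p.1 p.2 *
        (Real.sqrt (4 * |y| + (p.1 - s * p.2) ^ 2) - t * (p.1 + s * p.2))) := by
  have hg := g_convex y s t
  by_cases hα1 : α > 1
  · have : (fun p : ℝ × ℝ => gammaFn y s t α p.1 p.2 *
        (Real.sqrt (4 * |y| + (p.1 - s * p.2) ^ 2) - t * (p.1 + s * p.2))) =
        (fun p : ℝ × ℝ => max (Real.sqrt (4 * |y| + (p.1 - s * p.2) ^ 2) - t * (p.1 + s * p.2))
          (α * (Real.sqrt (4 * |y| + (p.1 - s * p.2) ^ 2) - t * (p.1 + s * p.2)))) := by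
      funext p
      set G := Real.sqrt (4 * |y| + (p.1 - s * p.2) ^ 2) - t * (p.1 + s * p.2) with hG
      by_cases hle : G ≤ 0
      · rw [gammaFn, if_pos ⟨hα1, hle⟩]
        have : α * G ≤ G := by nlinarith
        rw [max_eq_left this]; ring
      · rw [gammaFn, if_neg (by tauto)]
        push_neg at hle
        have : G ≤ α * G := by nlinarith
        rw [max_eq_right this]
    rw [this]
    exact hg.sup (hg.smul hα)
  · have : (fun p : ℝ × ℝ => gammaFn y s t α p.1 p.2 *
        (Real.sqrt (4 * |y| + (p.1 - s * p.2) ^ 2) - t * (p.1 + s * p.2))) =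
        (fun p : ℝ × ℝ => α * (Real.sqrt (4 * |y| + (p.1 - s * p.2) ^ 2) - t * (p.1 + s * p.2))) := by
      funext p
      rw [gammaFn, if_neg (by tauto)]
    rw [this]
    exact hg.smul hα
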